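/- Let G be a finite group. The power graph Pow(G) is a complete graph (every two distinct elements of G are adjacent) if and only if G is a cyclic group of prime power order, i.e. G is cyclic and there is a prime p such that G is a p-group. -/

import Mathlib

/-- The power graph of a group `G`: distinct `x` and `y` are adjacent iff
`x ∈ ⟨y⟩` or `y ∈ ⟨x⟩`. -/
def powGraph (G : Type*) [Group G] : SimpleGraph G where
  Adj x y := x ≠ y ∧ (x ∈ Subgroup.zpowers y ∨ y ∈ Subgroup.zpowers x)
  symm := by
    constructor
    rintro x y ⟨hne, h⟩
    exact ⟨hne.symm, h.symm⟩
  loopless := by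
    constructor
    rintro x ⟨hne, -⟩
    exact hne rfl

/-- In a finite cyclic group, if `orderOf x ∣ orderOf y` then `x ∈ ⟨y⟩`. -/
lemma mem_zpowers_of_orderOf_dvd_aux {G : Type*} [Group G] [Fintype G] [IsCyclic G] {x y : G}
    (h : orderOf x ∣ orderOf y) : x ∈ Subgroup.zpowers y := by
  classical
  have hn0 : 0 < orderOf y := orderOf_pos y
  have hS : (Finset.filter (fun a : G => a ^ orderOf y = 1) Finset.univ).card ≤ orderOf y :=
    IsCyclic.card_pow_eq_one_le hn0
  have hsub : (Subgroup.zpowers y : Set G).toFinset ⊆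
      (Finset.filter (fun a : G => a ^ orderOf y = 1) Finset.univ) := by
    intro z hz
    rw [Set.mem_toFinset] at hz
    simp only [Finset.mem_filter, Finset.mem_univ, true_and, Set.mem_setOf_eq]
    exact orderOf_dvd_iff_pow_eq_one.mp (orderOf_dvd_of_mem_zpowers hz)
  have hcard : (Subgroup.zpowers y : Set G).toFinset.card = orderOf y := by
    rw [Set.toFinset_card, ← Nat.card_zpowers y, Nat.card_eq_fintype_card]
    rfl
  have heq := Finset.eq_of_subset_of_card_le hsub (by omega)
  have hx : x ∈ (Finset.filter (fun a : G => a ^ orderOf y = 1) Finset.univ) := by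
    simp only [Finset.mem_filter, Finset.mem_univ, true_and, Set.mem_setOf_eq]
    exact orderOf_dvd_iff_pow_eq_one.mp h
  rw [← heq, Set.mem_toFinset] at hx
  exact hx

/-- The power graph of a finite group `G` is complete iff `G` is cyclic of prime power
order. -/
theorem powGraph_complete_iff_cyclic_primePower
    {G : Type*} [Group G] [Finite G] :
    (∀ x y : G, x ≠ y → (powGraph G).Adj x y) ↔
      (IsCyclic G ∧ ∃ p : ℕ, p.Prime ∧ IsPGroup p G) := by
  constructor
  · intro h
    obtain ⟨g, hg⟩ := Finite.exists_max (fun x : G => orderOf x)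
    have hcyc : IsCyclic G := by
      refine ⟨g, fun y => ?_⟩
      by_cases hy : y = g
      · subst hy; exact Subgroup.mem_zpowers y
      rcases (h y g hy).2 with h1 | h2
      · exact h1
      · have hle : Subgroup.zpowers g ≤ Subgroup.zpowers y := Subgroup.zpowers_le.mpr h2
        have heq : Subgroup.zpowers g = Subgroup.zpowers y :=
          Subgroup.eq_of_le_of_card_ge hle
            (by rw [Nat.card_zpowers, Nat.card_zpowers]; exact hg y)
        show y ∈ Subgroup.zpowers g
        rw [heq]
        exact Subgroup.mem_zpowers y
    refine ⟨hcyc, ?_⟩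
    rcases eq_or_ne (Nat.card G) 1 with h1 | h1
    · exact ⟨2, Nat.prime_two, IsPGroup.of_card (by rw [h1, pow_zero])⟩
    · set p := (Nat.card G).minFac with hpdef
      have hp : p.Prime := Nat.minFac_prime h1
      haveI := Fact.mk hp
      refine ⟨p, hp, IsPGroup.iff_orderOf.mpr fun a => ?_⟩
      have ha0 : orderOf a ≠ 0 := (orderOf_pos a).ne'
      have key : ∀ q : ℕ, q.Prime → q ∣ orderOf a → q = p := by
        intro q hq hqd
        by_contra hne
        set x := a ^ (orderOf a / q) with hxdef
        have hx : orderOf x = q := orderOf_pow_orderOf_div ha0 hqd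
        obtain ⟨z, hz⟩ := exists_prime_orderOf_dvd_card' p (Nat.minFac_dvd _)
        have hxz : x ≠ z := fun e => hne (by rw [← hx, e, hz])
        rcases (h x z hxz).2 with hm | hm
        · have hd := orderOf_dvd_of_mem_zpowers hm
          rw [hx, hz] at hd
          exact hne ((Nat.prime_dvd_prime_iff_eq hq hp).mp hd)
        · have hd := orderOf_dvd_of_mem_zpowers hm
          rw [hx, hz] at hd
          exact hne ((Nat.prime_dvd_prime_iff_eq hp hq).mp hd).symm
      exact ⟨(orderOf a).primeFactorsList.length,
        Nat.eq_prime_pow_of_unique_prime_dvd ha0 (fun hd hdvd => key _ hd hdvd)⟩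
  · rintro ⟨hcyc, p, hp, hpg⟩ x y hxy
    haveI := Fact.mk hp
    haveI : Fintype G := Fintype.ofFinite G
    refine ⟨hxy, ?_⟩
    obtain ⟨a, ha⟩ := IsPGroup.iff_orderOf.mp hpg x
    obtain ⟨b, hb⟩ := IsPGroup.iff_orderOf.mp hpg y
    rcases le_total a b with hab | hab
    · exact Or.inl (mem_zpowers_of_orderOf_dvd_aux
        (by rw [ha, hb]; exact pow_dvd_pow p hab))
    · exact Or.inr (mem_zpowers_of_orderOf_dvd_aux
        (by rw [ha, hb]; exact pow_dvd_pow p hab))
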